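/- Let m ≥ 2 and 1 ≤ ℓ < m. The gonality of the Ferrers rook graph R(S(m,2,ℓ)), where S(m,2,ℓ) is a single row of m boxes together with a second row of ℓ boxes, equals m − 1. -/

import Mathlib

open Finset

open scoped Classical

/-- A divisor is effective if it is nonnegative everywhere. -/
def Effective {V : Type*} (D : V → ℤ) : Prop := ∀ v, 0 ≤ D v

/-- The degree of a divisor: the total number of chips. -/
def degD {V : Type*} [Fintype V] (D : V → ℤ) : ℤ := ∑ v, D v

/-- The effect on a vertex `w` of firing each vertex `u` with multiplicity `f u`. -/
noncomputable def lap {V : Type*} [Fintype V] (G : SimpleGraph V) (f : V → ℤ) (w : V) : ℤ :=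
  (∑ u, f u * (if G.Adj u w then 1 else 0)) - f w * (∑ u, if G.Adj u w then (1 : ℤ) else 0)

/-- Two divisors are (chip-firing) equivalent if one is obtained from the other by a
sequence of chip-firing moves, i.e. they differ by a Laplacian of some `f : V → ℤ`. -/
def LinEquiv {V : Type*} [Fintype V] (G : SimpleGraph V) (D D' : V → ℤ) : Prop :=
  ∃ f : V → ℤ, ∀ w, D' w = D w + lap G f w

/-- A divisor has positive rank if for every vertex there is an equivalent effective
divisor with a chip at that vertex. -/
def PositiveRank {V : Type*} [Fintype V] (G : SimpleGraph V) (D : V → ℤ) : Prop :=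
  ∀ v, ∃ D', LinEquiv G D D' ∧ Effective D' ∧ 0 < D' v

/-- A Ferrers diagram: a finite subset of ℕ² with coordinates ≥ 1, closed under
decreasing either coordinate toward 1. -/
def IsFerrers (F : Finset (ℕ × ℕ)) : Prop :=
  ∀ p ∈ F, 1 ≤ p.1 ∧ 1 ≤ p.2 ∧ (p.1 = 1 ∨ (p.1 - 1, p.2) ∈ F) ∧ (p.2 = 1 ∨ (p.1, p.2 - 1) ∈ F)

/-- The Ferrers rook graph: vertices are points of `F`, two distinct points adjacent
iff they share a row or a column. -/
def rookGraph (F : Finset (ℕ × ℕ)) : SimpleGraph {p // p ∈ F} where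
  Adj a b := a ≠ b ∧ ((a : ℕ × ℕ).1 = (b : ℕ × ℕ).1 ∨ (a : ℕ × ℕ).2 = (b : ℕ × ℕ).2)
  symm := ⟨fun a b h => ⟨h.1.symm, h.2.imp Eq.symm Eq.symm⟩⟩
  loopless := ⟨fun a h => h.1 rfl⟩

/-- The set of degrees of positive-rank divisors on `R(F)`; its least element is the gonality. -/
def gonSet (F : Finset (ℕ × ℕ)) : Set ℤ :=
  {d | ∃ D : {p // p ∈ F} → ℤ, PositiveRank (rookGraph F) D ∧ degD D = d}

/-- The divisor `D_{x,y}`: one chip on each vertex not in column `x` and not in row `y`. -/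
def Dxy (F : Finset (ℕ × ℕ)) (x y : ℕ) : {p // p ∈ F} → ℤ :=
  fun p => if (p : ℕ × ℕ).1 ≠ x ∧ (p : ℕ × ℕ).2 ≠ y then 1 else 0

/-- The Ferrers diagram `S(m,2,ℓ)`: a row of `m` boxes and a second row of `ℓ` boxes. -/
def Sm2l (m ℓ : ℕ) : Finset (ℕ × ℕ) :=
  ((Finset.Icc 1 m) ×ˢ {1}) ∪ ((Finset.Icc 1 ℓ) ×ˢ {2})

section Generic
variable {V : Type*} [Fintype V] (G : SimpleGraph V)

lemma lap_eq' (f : V → ℤ) (w : V) :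
    lap G f w = ∑ u, (if G.Adj u w then f u - f w else 0) := by
  unfold lap
  rw [Finset.mul_sum, ← Finset.sum_sub_distrib]
  refine Finset.sum_congr rfl fun u _ => ?_
  by_cases h : G.Adj u w <;> simp [h]

lemma sum_lap (f : V → ℤ) : ∑ w, lap G f w = 0 := by
  have h : ∀ u w : V, (if G.Adj u w then f u - f w else 0)
      = -(if G.Adj w u then f w - f u else 0) := by
    intro u w; by_cases hadj : G.Adj u w
    · rw [if_pos hadj, if_pos hadj.symm]; ring
    · rw [if_neg hadj, if_neg (fun hc => hadj hc.symm)]; ring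
  have h2 : ∑ w : V, ∑ u : V, (if G.Adj u w then f u - f w else 0)
      = - ∑ w : V, ∑ u : V, (if G.Adj u w then f u - f w else 0) := by
    conv_lhs => rw [Finset.sum_comm]
    rw [← Finset.sum_neg_distrib]
    refine Finset.sum_congr rfl fun u _ => ?_
    rw [← Finset.sum_neg_distrib]
    exact Finset.sum_congr rfl fun w _ => h u w
  have h3 : ∑ w : V, ∑ u : V, (if G.Adj u w then f u - f w else 0) = 0 := by linarith
  calc ∑ w, lap G f w = ∑ w : V, ∑ u : V, (if G.Adj u w then f u - f w else 0) :=
        Finset.sum_congr rfl fun w _ => lap_eq' G f w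
    _ = 0 := h3

lemma lap_sub (f g : V → ℤ) (w : V) :
    lap G (fun u => f u - g u) w = lap G f w - lap G g w := by
  unfold lap
  have e1 : (∑ u : V, (fun u => f u - g u) u * (if G.Adj u w then (1:ℤ) else 0))
      = (∑ u : V, f u * (if G.Adj u w then (1:ℤ) else 0))
        - (∑ u : V, g u * (if G.Adj u w then (1:ℤ) else 0)) := by
    rw [← Finset.sum_sub_distrib]
    exact Finset.sum_congr rfl fun u _ => by ring
  rw [e1]; ring

lemma lap_neg (f : V → ℤ) (w : V) : lap G (fun u => - f u) w = - lap G f w := by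
  unfold lap
  have e1 : (∑ u : V, (fun u => - f u) u * (if G.Adj u w then (1:ℤ) else 0))
      = - (∑ u : V, f u * (if G.Adj u w then (1:ℤ) else 0)) := by
    rw [← Finset.sum_neg_distrib]
    exact Finset.sum_congr rfl fun u _ => by ring
  rw [e1]; ring

lemma degD_linEquiv {D D' : V → ℤ} (h : LinEquiv G D D') : degD D' = degD D := by
  obtain ⟨f, hf⟩ := h
  unfold degD
  rw [Finset.sum_congr rfl fun w _ => hf w, Finset.sum_add_distrib, sum_lap, add_zero]

lemma L1 (D f : V → ℤ) (t : ℤ)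
    (hE : Effective (fun w => D w + lap G f w)) :
    ∑ v ∈ Finset.univ.filter (fun v => t ≤ f v),
      ∑ u ∈ Finset.univ.filter (fun u => ¬ t ≤ f u), (if G.Adj u v then (1:ℤ) else 0)
    ≤ ∑ v ∈ Finset.univ.filter (fun v => t ≤ f v), D v := by
  set A : Finset V := Finset.univ.filter (fun v => t ≤ f v) with hA
  set A' : Finset V := Finset.univ.filter (fun u => ¬ t ≤ f u) with hA'
  have hv : ∀ v : V, ∑ u : V, (if G.Adj u v then f v - f u else 0) ≤ D v := by
    intro v
    have h0 := hE v
    simp only at h0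
    rw [lap_eq'] at h0
    have e1 : ∑ u : V, (if G.Adj u v then f v - f u else 0)
        = - ∑ u : V, (if G.Adj u v then f u - f v else 0) := by
      rw [← Finset.sum_neg_distrib]
      refine Finset.sum_congr rfl fun u _ => ?_
      by_cases h : G.Adj u v <;> simp [h]
    linarith
  have anti : ∑ v ∈ A, ∑ u ∈ A, (if G.Adj u v then f v - f u else 0) = 0 := by
    have h2 : ∑ v ∈ A, ∑ u ∈ A, (if G.Adj u v then f v - f u else 0)
        = - ∑ v ∈ A, ∑ u ∈ A, (if G.Adj u v then f v - f u else 0) := by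
      conv_lhs => rw [Finset.sum_comm]
      rw [← Finset.sum_neg_distrib]
      refine Finset.sum_congr rfl fun u _ => ?_
      rw [← Finset.sum_neg_distrib]
      refine Finset.sum_congr rfl fun w _ => ?_
      by_cases h : G.Adj u w
      · rw [if_pos h, if_pos h.symm]; ring
      · rw [if_neg h, if_neg (fun hc => h hc.symm)]; ring
    linarith
  have split : ∀ v : V, ∑ u ∈ A, (if G.Adj u v then f v - f u else 0)
      + ∑ u ∈ A', (if G.Adj u v then f v - f u else 0)
      = ∑ u : V, (if G.Adj u v then f v - f u else 0) := by
    intro v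
    exact Finset.sum_filter_add_sum_filter_not Finset.univ _ _
  have step1 : ∑ v ∈ A, ∑ u ∈ A', (if G.Adj u v then f v - f u else 0) ≤ ∑ v ∈ A, D v := by
    have e2 : ∑ v ∈ A, ∑ u ∈ A', (if G.Adj u v then f v - f u else 0)
        = (∑ v ∈ A, ∑ u : V, (if G.Adj u v then f v - f u else 0))
          - ∑ v ∈ A, ∑ u ∈ A, (if G.Adj u v then f v - f u else 0) := by
      rw [← Finset.sum_sub_distrib]
      refine Finset.sum_congr rfl fun v _ => ?_
      linarith [split v]
    rw [e2, anti, sub_zero]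
    exact Finset.sum_le_sum fun v _ => hv v
  refine le_trans ?_ step1
  refine Finset.sum_le_sum fun v hvA => ?_
  refine Finset.sum_le_sum fun u huA => ?_
  have hv' : t ≤ f v := (Finset.mem_filter.mp hvA).2
  have hu' : ¬ t ≤ f u := (Finset.mem_filter.mp huA).2
  by_cases h : G.Adj u v
  · rw [if_pos h, if_pos h]; omega
  · rw [if_neg h, if_neg h]

end Generic

section Spec
variable {m ℓ : ℕ}

lemma mem_Sm2l {p : ℕ × ℕ} :
    p ∈ Sm2l m ℓ ↔ (1 ≤ p.1 ∧ p.1 ≤ m ∧ p.2 = 1) ∨ (1 ≤ p.1 ∧ p.1 ≤ ℓ ∧ p.2 = 2) := by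
  obtain ⟨x, y⟩ := p
  simp only [Sm2l, Finset.mem_union, Finset.mem_product, Finset.mem_Icc, Finset.mem_singleton]
  tauto

lemma adj_coords {u v : {p // p ∈ Sm2l m ℓ}} :
    (rookGraph (Sm2l m ℓ)).Adj u v
      ↔ ((u : ℕ × ℕ) ≠ (v : ℕ × ℕ) ∧ ((u : ℕ × ℕ).1 = (v : ℕ × ℕ).1 ∨ (u : ℕ × ℕ).2 = (v : ℕ × ℕ).2)) := by
  change (u ≠ v ∧ _) ↔ _
  rw [ne_eq, ne_eq, Subtype.ext_iff]

lemma sum_subtype_Sm2l (g : ℕ × ℕ → ℤ) :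
    ∑ u : {p // p ∈ Sm2l m ℓ}, g u.1 = ∑ p ∈ Sm2l m ℓ, g p :=
  (Finset.sum_subtype (Sm2l m ℓ) (fun _ => Iff.rfl) g).symm

lemma count_lemma (P : ℕ × ℕ → Prop) [DecidablePred P] :
    ∑ u : {p // p ∈ Sm2l m ℓ}, (if P u.1 then (1:ℤ) else 0)
      = (((Sm2l m ℓ).filter P).card : ℤ) := by
  rw [sum_subtype_Sm2l (fun p => if P p then (1:ℤ) else 0)]
  rw [Finset.sum_boole]

lemma card_filter_subtype (P : ℕ × ℕ → Prop) [DecidablePred P] :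
    (Finset.univ.filter (fun v : {p // p ∈ Sm2l m ℓ} => P v.1)).card
      = ((Sm2l m ℓ).filter P).card := by
  have h1 : ((Finset.univ.filter (fun v : {p // p ∈ Sm2l m ℓ} => P v.1)).card : ℤ)
      = (((Sm2l m ℓ).filter P).card : ℤ) := by
    rw [← count_lemma]
    rw [Finset.card_filter]
    push_cast
    exact Finset.sum_congr rfl fun u _ => by by_cases h : P u.1 <;> simp [h]
  exact_mod_cast h1

end Spec

section Counts
variable {m ℓ x : ℕ}

lemma filter_R1 : (Sm2l m ℓ).filter (fun p => p.2 = 1) = Finset.Icc 1 m ×ˢ {1} := by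
  ext ⟨a, b⟩
  simp only [Finset.mem_filter, mem_Sm2l, Finset.mem_product, Finset.mem_Icc,
    Finset.mem_singleton]
  omega

lemma filter_R2 : (Sm2l m ℓ).filter (fun p => p.2 = 2) = Finset.Icc 1 ℓ ×ˢ {2} := by
  ext ⟨a, b⟩
  simp only [Finset.mem_filter, mem_Sm2l, Finset.mem_product, Finset.mem_Icc,
    Finset.mem_singleton]
  omega

lemma filter_H : (Sm2l m ℓ).filter (fun p => p.2 = 1 ∧ ℓ < p.1)
    = Finset.Icc (ℓ+1) m ×ˢ {1} := by
  ext ⟨a, b⟩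
  simp only [Finset.mem_filter, mem_Sm2l, Finset.mem_product, Finset.mem_Icc,
    Finset.mem_singleton]
  omega

lemma filter_am (hℓ2 : ℓ < m) :
    (Sm2l m ℓ).filter (fun p => p ≠ ((m:ℕ),(1:ℕ)) ∧ (p.1 = m ∨ p.2 = 1))
      = Finset.Icc 1 (m-1) ×ˢ {1} := by
  ext ⟨a, b⟩
  simp only [Finset.mem_filter, mem_Sm2l, Finset.mem_product, Finset.mem_Icc,
    Finset.mem_singleton, ne_eq, Prod.mk.injEq, not_and]
  omega

lemma filter_N1row1 (hx1 : 1 ≤ x) (hx2 : x ≤ m) :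
    (Sm2l m ℓ).filter (fun p => p.2 = 1 ∧ (p ≠ ((x:ℕ),(1:ℕ)) ∧ (p.1 = x ∨ p.2 = 1)))
      = ((Finset.Icc 1 m).erase x) ×ˢ {1} := by
  ext ⟨a, b⟩
  simp only [Finset.mem_filter, mem_Sm2l, Finset.mem_product, Finset.mem_Icc,
    Finset.mem_singleton, ne_eq, Prod.mk.injEq, not_and, Finset.mem_erase]
  omega

lemma filter_degrow1_le (hx1 : 1 ≤ x) (hx2 : x ≤ ℓ) :
    (Sm2l m ℓ).filter (fun p => p ≠ ((x:ℕ),(1:ℕ)) ∧ (p.1 = x ∨ p.2 = 1))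
      = (((Finset.Icc 1 m).erase x) ×ˢ {1}) ∪ {((x:ℕ),(2:ℕ))} := by
  ext ⟨a, b⟩
  simp only [Finset.mem_filter, mem_Sm2l, Finset.mem_product, Finset.mem_Icc,
    Finset.mem_singleton, ne_eq, Prod.mk.injEq, not_and, Finset.mem_erase,
    Finset.mem_union]
  omega

lemma filter_degrow1_gt (hx1 : 1 ≤ x) (hx2 : ℓ < x) :
    (Sm2l m ℓ).filter (fun p => p ≠ ((x:ℕ),(1:ℕ)) ∧ (p.1 = x ∨ p.2 = 1))
      = ((Finset.Icc 1 m).erase x) ×ˢ {1} := by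
  ext ⟨a, b⟩
  simp only [Finset.mem_filter, mem_Sm2l, Finset.mem_product, Finset.mem_Icc,
    Finset.mem_singleton, ne_eq, Prod.mk.injEq, not_and, Finset.mem_erase]
  omega

lemma filter_N1row2 (hx1 : 1 ≤ x) (hx2 : x ≤ ℓ) (hℓm : ℓ ≤ m) :
    (Sm2l m ℓ).filter (fun p => p.2 = 1 ∧ (p ≠ ((x:ℕ),(2:ℕ)) ∧ (p.1 = x ∨ p.2 = 2)))
      = {((x:ℕ),(1:ℕ))} := by
  ext ⟨a, b⟩
  simp only [Finset.mem_filter, mem_Sm2l, Finset.mem_singleton, ne_eq,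
    Prod.mk.injEq, not_and]
  omega

lemma card_erase_Icc (hx1 : 1 ≤ x) (hx2 : x ≤ m) :
    (((Finset.Icc 1 m).erase x) ×ˢ ({1} : Finset ℕ)).card = m - 1 := by
  rw [Finset.card_product, Finset.card_erase_of_mem (Finset.mem_Icc.mpr ⟨hx1, hx2⟩)]
  simp [Nat.card_Icc]

end Counts

section SpecGraph
variable {m ℓ : ℕ}

abbrev Vt (m ℓ : ℕ) := {p // p ∈ Sm2l m ℓ}

lemma adj_mk' (x y : ℕ) (h : ((x:ℕ),(y:ℕ)) ∈ Sm2l m ℓ) (u : Vt m ℓ) :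
    (rookGraph (Sm2l m ℓ)).Adj u ⟨(x,y), h⟩ ↔ (u.1 ≠ (x,y) ∧ (u.1.1 = x ∨ u.1.2 = y)) :=
  adj_coords

lemma sum_adj_am (hm : 1 ≤ m) (hℓ2 : ℓ < m) (hmem : ((m:ℕ),(1:ℕ)) ∈ Sm2l m ℓ) :
    ∑ u : Vt m ℓ, (if (rookGraph (Sm2l m ℓ)).Adj u ⟨(m,1),hmem⟩ then (1:ℤ) else 0)
      = (m:ℤ) - 1 := by
  have e0 : ∑ u : Vt m ℓ, (if (rookGraph (Sm2l m ℓ)).Adj u ⟨(m,1),hmem⟩ then (1:ℤ) else 0)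
      = ∑ u : Vt m ℓ, (if (u.1 ≠ ((m:ℕ),(1:ℕ)) ∧ (u.1.1 = m ∨ u.1.2 = 1)) then (1:ℤ) else 0) :=
    Finset.sum_congr rfl fun u _ => if_congr (adj_mk' m 1 hmem u) rfl rfl
  have e1 := count_lemma (m := m) (ℓ := ℓ) (fun p => p ≠ ((m:ℕ),(1:ℕ)) ∧ (p.1 = m ∨ p.2 = 1))
  rw [e0, e1, filter_am hℓ2, Finset.card_product]
  simp only [Finset.card_singleton, Nat.card_Icc, mul_one]
  push_cast [Nat.cast_sub hm]
  ring


lemma sum_adj_row1 (hm : 1 ≤ m) (a : ℕ) (ha1 : 1 ≤ a) (ha2 : a ≤ m)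
    (hmem : ((a:ℕ),(1:ℕ)) ∈ Sm2l m ℓ) :
    ∑ u : Vt m ℓ, (if (rookGraph (Sm2l m ℓ)).Adj u ⟨(a,1),hmem⟩ then (1:ℤ) else 0)
      = ((m:ℤ) - 1) + (if a ≤ ℓ then 1 else 0) := by
  have e0 : ∑ u : Vt m ℓ, (if (rookGraph (Sm2l m ℓ)).Adj u ⟨(a,1),hmem⟩ then (1:ℤ) else 0)
      = ∑ u : Vt m ℓ, (if (u.1 ≠ ((a:ℕ),(1:ℕ)) ∧ (u.1.1 = a ∨ u.1.2 = 1)) then (1:ℤ) else 0) :=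
    Finset.sum_congr rfl fun u _ => if_congr (adj_mk' a 1 hmem u) rfl rfl
  have e1 := count_lemma (m := m) (ℓ := ℓ) (fun p => p ≠ ((a:ℕ),(1:ℕ)) ∧ (p.1 = a ∨ p.2 = 1))
  rw [e0, e1]
  by_cases hle : a ≤ ℓ
  · rw [if_pos hle, filter_degrow1_le ha1 hle, Finset.card_union_of_disjoint (by simp),
      card_erase_Icc ha1 ha2, Finset.card_singleton]
    push_cast [Nat.cast_sub hm]
    ring
  · rw [if_neg hle, filter_degrow1_gt ha1 (by omega), card_erase_Icc ha1 ha2]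
    push_cast [Nat.cast_sub hm]
    ring

lemma sum_f2_adj_row1 (hm : 1 ≤ m) (a : ℕ) (ha1 : 1 ≤ a) (ha2 : a ≤ m)
    (hmem : ((a:ℕ),(1:ℕ)) ∈ Sm2l m ℓ) :
    ∑ u : Vt m ℓ, ((if u.1.2 = 1 then (1:ℤ) else 0)
        * (if (rookGraph (Sm2l m ℓ)).Adj u ⟨(a,1),hmem⟩ then (1:ℤ) else 0))
      = (m:ℤ) - 1 := by
  have e0 : ∑ u : Vt m ℓ, ((if u.1.2 = 1 then (1:ℤ) else 0)
        * (if (rookGraph (Sm2l m ℓ)).Adj u ⟨(a,1),hmem⟩ then (1:ℤ) else 0))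
      = ∑ u : Vt m ℓ, (if (u.1.2 = 1 ∧ (u.1 ≠ ((a:ℕ),(1:ℕ)) ∧ (u.1.1 = a ∨ u.1.2 = 1)))
          then (1:ℤ) else 0) := by
    refine Finset.sum_congr rfl fun u _ => ?_
    rw [if_congr (adj_mk' a 1 hmem u) rfl rfl]
    by_cases h1 : u.1.2 = 1 <;>
      by_cases h2 : (u.1 ≠ ((a:ℕ),(1:ℕ)) ∧ (u.1.1 = a ∨ u.1.2 = 1)) <;>
      simp [h1, h2]
  have e1 := count_lemma (m := m) (ℓ := ℓ)
    (fun p => p.2 = 1 ∧ (p ≠ ((a:ℕ),(1:ℕ)) ∧ (p.1 = a ∨ p.2 = 1)))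
  rw [e0, e1, filter_N1row1 ha1 ha2, card_erase_Icc ha1 ha2]
  push_cast [Nat.cast_sub hm]
  ring

lemma sum_f2_adj_row2 (hℓm : ℓ ≤ m) (a : ℕ) (ha1 : 1 ≤ a) (ha2 : a ≤ ℓ)
    (hmem : ((a:ℕ),(2:ℕ)) ∈ Sm2l m ℓ) :
    ∑ u : Vt m ℓ, ((if u.1.2 = 1 then (1:ℤ) else 0)
        * (if (rookGraph (Sm2l m ℓ)).Adj u ⟨(a,2),hmem⟩ then (1:ℤ) else 0))
      = 1 := by
  have e0 : ∑ u : Vt m ℓ, ((if u.1.2 = 1 then (1:ℤ) else 0)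
        * (if (rookGraph (Sm2l m ℓ)).Adj u ⟨(a,2),hmem⟩ then (1:ℤ) else 0))
      = ∑ u : Vt m ℓ, (if (u.1.2 = 1 ∧ (u.1 ≠ ((a:ℕ),(2:ℕ)) ∧ (u.1.1 = a ∨ u.1.2 = 2)))
          then (1:ℤ) else 0) := by
    refine Finset.sum_congr rfl fun u _ => ?_
    rw [if_congr (adj_mk' a 2 hmem u) rfl rfl]
    by_cases h1 : u.1.2 = 1 <;>
      by_cases h2 : (u.1 ≠ ((a:ℕ),(2:ℕ)) ∧ (u.1.1 = a ∨ u.1.2 = 2)) <;>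
      simp [h1, h2]
  have e1 := count_lemma (m := m) (ℓ := ℓ)
    (fun p => p.2 = 1 ∧ (p ≠ ((a:ℕ),(2:ℕ)) ∧ (p.1 = a ∨ p.2 = 2)))
  rw [e0, e1, filter_N1row2 ha1 ha2 hℓm]
  simp


section Upper
variable {m ℓ : ℕ}

lemma filter_D :
    (Sm2l m ℓ).filter (fun p => p.1 ≠ m ∧ p.2 ≠ 2) = Finset.Icc 1 (m-1) ×ˢ {1} := by
  ext ⟨a, b⟩
  simp only [Finset.mem_filter, mem_Sm2l, Finset.mem_product, Finset.mem_Icc,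
    Finset.mem_singleton, ne_eq]
  omega

lemma deg_Dxy (hm : 1 ≤ m) : degD (Dxy (Sm2l m ℓ) m 2) = (m:ℤ) - 1 := by
  unfold degD Dxy
  have e1 := count_lemma (m := m) (ℓ := ℓ) (fun p => p.1 ≠ m ∧ p.2 ≠ 2)
  rw [e1, filter_D, Finset.card_product, Finset.card_singleton, Nat.card_Icc]
  push_cast [Nat.cast_sub hm]
  ring

lemma upper_mem (hm : 2 ≤ m) (hℓ1 : 1 ≤ ℓ) (hℓ2 : ℓ < m) :
    ((m:ℤ) - 1) ∈ gonSet (Sm2l m ℓ) := by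
  refine ⟨Dxy (Sm2l m ℓ) m 2, ?_, deg_Dxy (by omega)⟩
  intro v
  have hvmem := mem_Sm2l.mp v.2
  have hmm : ((m:ℕ),(1:ℕ)) ∈ Sm2l m ℓ := mem_Sm2l.mpr (Or.inl ⟨by omega, le_refl m, rfl⟩)
  by_cases hv1 : v.1.2 = 1 ∧ v.1.1 ≠ m
  · -- a row-one vertex other than (m,1): D itself has a chip there
    refine ⟨Dxy (Sm2l m ℓ) m 2, ⟨fun _ => 0, fun w => ?_⟩, fun w => ?_, ?_⟩
    · simp [lap]
    · unfold Dxy; split_ifs <;> norm_num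
    · unfold Dxy
      split_ifs <;> omega
  · by_cases hv2 : v.1.2 = 1
    · -- v = (m,1)
      have hvm : v.1.1 = m := by tauto
      have hveq : v = (⟨(m,1), hmm⟩ : Vt m ℓ) := by
        apply Subtype.ext
        exact Prod.ext hvm hv2
      set f₁ : Vt m ℓ → ℤ := fun u => if u = ⟨(m,1), hmm⟩ then (-1:ℤ) else 0 with hf₁
      have key : ∀ w : Vt m ℓ, lap (rookGraph (Sm2l m ℓ)) f₁ w
          = -(if (rookGraph (Sm2l m ℓ)).Adj (⟨(m,1), hmm⟩ : Vt m ℓ) w then (1:ℤ) else 0)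
            + (if w = ⟨(m,1), hmm⟩ then ((m:ℤ) - 1) else 0) := by
        intro w
        unfold lap
        have h1 : ∑ u : Vt m ℓ, f₁ u * (if (rookGraph (Sm2l m ℓ)).Adj u w then (1:ℤ) else 0)
            = -(if (rookGraph (Sm2l m ℓ)).Adj (⟨(m,1), hmm⟩ : Vt m ℓ) w then (1:ℤ) else 0) := by
          rw [Finset.sum_eq_single (⟨(m,1), hmm⟩ : Vt m ℓ)]
          · simp only [hf₁]
            rw [if_pos trivial]
            split_ifs <;> ring
          · intro b _ hb; simp only [hf₁]; rw [if_neg hb]; ring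
          · intro h; exact absurd (Finset.mem_univ _) h
        rw [h1]
        by_cases hw : w = (⟨(m,1), hmm⟩ : Vt m ℓ)
        · subst hw
          simp only [hf₁]
          rw [if_pos trivial, if_pos trivial, sum_adj_am (by omega) hℓ2 hmm]
          ring
        · rw [if_neg hw]
          simp only [hf₁]
          rw [if_neg hw]
          ring
      refine ⟨fun w => Dxy (Sm2l m ℓ) m 2 w + lap (rookGraph (Sm2l m ℓ)) f₁ w,
        ⟨f₁, fun w => rfl⟩, fun w => ?_, ?_⟩
      · -- effectiveness
        dsimp only
        rw [key w]
        by_cases hw : w = (⟨(m,1), hmm⟩ : Vt m ℓ)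
        · subst hw
          rw [if_pos rfl, if_neg (rookGraph (Sm2l m ℓ)).irrefl]
          unfold Dxy
          rw [if_neg (by simp)]
          push_cast
          omega
        · rw [if_neg hw]
          have hwmem := mem_Sm2l.mp w.2
          by_cases hwr : w.1.2 = 1
          · have hadj : (rookGraph (Sm2l m ℓ)).Adj (⟨(m,1), hmm⟩ : Vt m ℓ) w := by
              rw [(rookGraph (Sm2l m ℓ)).adj_comm, adj_mk' m 1 hmm w]
              refine ⟨fun hc => hw (Subtype.ext hc), Or.inr hwr⟩
            rw [if_pos hadj]
            unfold Dxy
            have hwm : w.1.1 ≠ m := by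
              intro hc
              exact hw (Subtype.ext (Prod.ext hc hwr))
            rw [if_pos ⟨hwm, by omega⟩]
            norm_num
          · have hwr2 : w.1.2 = 2 := by tauto
            have hwl : w.1.1 ≤ ℓ := by
              rcases hvmem with _ | _ <;> rcases mem_Sm2l.mp w.2 with h | h <;> omega
            have hadj : ¬ (rookGraph (Sm2l m ℓ)).Adj (⟨(m,1), hmm⟩ : Vt m ℓ) w := by
              rw [(rookGraph (Sm2l m ℓ)).adj_comm, adj_mk' m 1 hmm w]
              rintro ⟨-, h | h⟩ <;> omega
            rw [if_neg hadj]
            unfold Dxy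
            split_ifs <;> norm_num
      · -- positivity at v
        dsimp only
        rw [hveq, key, if_pos rfl, if_neg (rookGraph (Sm2l m ℓ)).irrefl]
        unfold Dxy
        rw [if_neg (by simp)]
        push_cast
        omega
    · -- v is in row 2
      have hv2' : v.1.2 = 2 := by tauto
      set f₂ : Vt m ℓ → ℤ := fun u => if u.1.2 = 1 then (1:ℤ) else 0 with hf₂
      refine ⟨fun w => Dxy (Sm2l m ℓ) m 2 w + lap (rookGraph (Sm2l m ℓ)) f₂ w,
        ⟨f₂, fun w => rfl⟩, ?_, ?_⟩
      · -- effectiveness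
        intro w
        obtain ⟨⟨a, b⟩, hw⟩ := w
        dsimp only
        rcases mem_Sm2l.mp hw with ⟨ha1, ha2, hb⟩ | ⟨ha1, ha2, hb⟩
        · subst hb
          unfold lap
          rw [sum_f2_adj_row1 (by omega) a ha1 ha2 hw, sum_adj_row1 (by omega) a ha1 ha2 hw]
          rw [hf₂]
          simp only [if_pos rfl]
          unfold Dxy
          dsimp only
          split_ifs <;> push_cast <;> omega
        · subst hb
          unfold lap
          rw [sum_f2_adj_row2 (le_of_lt hℓ2) a ha1 ha2 hw]
          rw [hf₂]
          simp only
          rw [if_neg (by norm_num)]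
          unfold Dxy
          dsimp only
          split_ifs <;> push_cast <;> omega
      · -- positivity at v
        obtain ⟨⟨a, b⟩, hv⟩ := v
        dsimp only
        simp only at hv2'
        subst hv2'
        rcases mem_Sm2l.mp hv with ⟨ha1, ha2, hb⟩ | ⟨ha1, ha2, hb⟩
        · omega
        · unfold lap
          rw [sum_f2_adj_row2 (le_of_lt hℓ2) a ha1 ha2 hv]
          rw [hf₂]
          simp only
          rw [if_neg (by norm_num)]
          unfold Dxy
          split_ifs <;> norm_num

end Upper


section LowerAux
variable {m ℓ : ℕ}

lemma lap_eq_zero_of_adj_const {V : Type*} [Fintype V] (G : SimpleGraph V)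
    (f : V → ℤ) (w : V) (c : ℤ) (hfw : f w = c) (hadj : ∀ u, G.Adj u w → f u = c) :
    lap G f w = 0 := by
  unfold lap
  have e1 : ∑ u, f u * (if G.Adj u w then (1:ℤ) else 0)
      = ∑ u, c * (if G.Adj u w then (1:ℤ) else 0) := by
    refine Finset.sum_congr rfl fun u _ => ?_
    by_cases h : G.Adj u w
    · rw [hadj u h]
    · simp [h]
  rw [e1, ← Finset.mul_sum, hfw]
  ring

lemma card_R1 : (Finset.univ.filter (fun v : Vt m ℓ => v.1.2 = 1)).card = m := by
  have e := card_filter_subtype (m := m) (ℓ := ℓ) (fun p => p.2 = 1)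
  rw [e, filter_R1, Finset.card_product, Finset.card_singleton, Nat.card_Icc]
  omega

lemma card_R2 : (Finset.univ.filter (fun v : Vt m ℓ => v.1.2 = 2)).card = ℓ := by
  have e := card_filter_subtype (m := m) (ℓ := ℓ) (fun p => p.2 = 2)
  rw [e, filter_R2, Finset.card_product, Finset.card_singleton, Nat.card_Icc]
  omega

lemma card_H : (Finset.univ.filter (fun v : Vt m ℓ => v.1.2 = 1 ∧ ℓ < v.1.1)).card = m - ℓ := by
  have e := card_filter_subtype (m := m) (ℓ := ℓ) (fun p => p.2 = 1 ∧ ℓ < p.1)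
  rw [e, filter_H, Finset.card_product, Finset.card_singleton, Nat.card_Icc]
  omega

lemma const_row1 (hm : 2 ≤ m) (E₀ h : Vt m ℓ → ℤ) (hE₀ : Effective E₀)
    (hd : degD E₀ ≤ (m:ℤ) - 2)
    (heff : Effective (fun w => E₀ w + lap (rookGraph (Sm2l m ℓ)) h w)) :
    ∀ u v : Vt m ℓ, u.1.2 = 1 → v.1.2 = 1 → h u = h v := by
  have key : ∀ u v : Vt m ℓ, u.1.2 = 1 → v.1.2 = 1 → ¬ (h u < h v) := by
    intro u v hu hv hlt
    have hL := L1 (rookGraph (Sm2l m ℓ)) E₀ h (h v) heff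
    set A : Finset (Vt m ℓ) := Finset.univ.filter (fun w => h v ≤ h w) with hA
    set A' : Finset (Vt m ℓ) := Finset.univ.filter (fun w => ¬ h v ≤ h w) with hA'
    set R1 : Finset (Vt m ℓ) := Finset.univ.filter (fun w : Vt m ℓ => w.1.2 = 1) with hR1
    set s1 : Finset (Vt m ℓ) := R1.filter (fun w => h v ≤ h w) with hs1
    set s2 : Finset (Vt m ℓ) := R1.filter (fun w => ¬ h v ≤ h w) with hs2
    have hcards : s1.card + s2.card = m := by
      rw [hs1, hs2, Finset.card_filter_add_card_filter_not, hR1, card_R1]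
    have hvmem : v ∈ s1 := by
      rw [hs1, hR1]
      exact Finset.mem_filter.mpr ⟨Finset.mem_filter.mpr ⟨Finset.mem_univ _, hv⟩, le_refl _⟩
    have humem : u ∈ s2 := by
      rw [hs2, hR1]
      exact Finset.mem_filter.mpr ⟨Finset.mem_filter.mpr ⟨Finset.mem_univ _, hu⟩, by omega⟩
    have hs1c : 1 ≤ s1.card := Finset.card_pos.mpr ⟨v, hvmem⟩
    have hs2c : 1 ≤ s2.card := Finset.card_pos.mpr ⟨u, humem⟩
    -- lower bound the crossing sum
    have hcross : (s1.card : ℤ) * (s2.card : ℤ)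
        ≤ ∑ w ∈ A, ∑ z ∈ A', (if (rookGraph (Sm2l m ℓ)).Adj z w then (1:ℤ) else 0) := by
      have e1 : (s1.card : ℤ) * (s2.card : ℤ) = ∑ w ∈ s1, ∑ z ∈ s2, (1:ℤ) := by
        rw [Finset.sum_const, Finset.sum_const]
        simp [mul_comm]
      rw [e1]
      have e2 : ∀ w ∈ s1, ∑ z ∈ s2, (1:ℤ)
          ≤ ∑ z ∈ A', (if (rookGraph (Sm2l m ℓ)).Adj z w then (1:ℤ) else 0) := by
        intro w hw
        have e3 : ∑ z ∈ s2, (1:ℤ)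
            = ∑ z ∈ s2, (if (rookGraph (Sm2l m ℓ)).Adj z w then (1:ℤ) else 0) := by
          refine Finset.sum_congr rfl fun z hz => ?_
          have hz1 : z.1.2 = 1 := (Finset.mem_filter.mp (Finset.mem_filter.mp hz).1).2
          have hz2 : ¬ h v ≤ h z := (Finset.mem_filter.mp hz).2
          have hw1 : w.1.2 = 1 := (Finset.mem_filter.mp (Finset.mem_filter.mp hw).1).2
          have hw2 : h v ≤ h w := (Finset.mem_filter.mp hw).2
          rw [if_pos]
          constructor
          · intro hzw; rw [hzw] at hz2; exact hz2 hw2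
          · right; rw [hz1, hw1]
        rw [e3]
        refine Finset.sum_le_sum_of_subset_of_nonneg ?_ ?_
        · intro z hz
          exact Finset.mem_filter.mpr ⟨Finset.mem_univ _, (Finset.mem_filter.mp hz).2⟩
        · intro z _ _
          by_cases hadj : (rookGraph (Sm2l m ℓ)).Adj z w <;> simp [hadj]
      calc ∑ w ∈ s1, ∑ z ∈ s2, (1:ℤ)
          ≤ ∑ w ∈ s1, ∑ z ∈ A', (if (rookGraph (Sm2l m ℓ)).Adj z w then (1:ℤ) else 0) :=
            Finset.sum_le_sum e2
        _ ≤ ∑ w ∈ A, ∑ z ∈ A', (if (rookGraph (Sm2l m ℓ)).Adj z w then (1:ℤ) else 0) := by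
            refine Finset.sum_le_sum_of_subset_of_nonneg ?_ ?_
            · intro w hw
              exact Finset.mem_filter.mpr ⟨Finset.mem_univ _, (Finset.mem_filter.mp hw).2⟩
            · intro w _ _
              refine Finset.sum_nonneg fun z _ => ?_
              by_cases hadj : (rookGraph (Sm2l m ℓ)).Adj z w <;> simp [hadj]
    have hup : ∑ w ∈ A, E₀ w ≤ degD E₀ := by
      unfold degD
      exact Finset.sum_le_sum_of_subset_of_nonneg (Finset.subset_univ _) (fun w _ _ => hE₀ w)
    have hfin : (s1.card : ℤ) * (s2.card : ℤ) ≤ (m:ℤ) - 2 := by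
      calc (s1.card : ℤ) * (s2.card : ℤ) ≤ _ := hcross
        _ ≤ ∑ w ∈ A, E₀ w := hL
        _ ≤ degD E₀ := hup
        _ ≤ (m:ℤ) - 2 := hd
    have hc1 : (1:ℤ) ≤ (s1.card : ℤ) := by exact_mod_cast hs1c
    have hc2 : (1:ℤ) ≤ (s2.card : ℤ) := by exact_mod_cast hs2c
    have hcm : (s1.card : ℤ) + (s2.card : ℤ) = (m:ℤ) := by exact_mod_cast hcards
    nlinarith [mul_nonneg (sub_nonneg.mpr hc1) (sub_nonneg.mpr hc2)]
  intro u v hu hv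
  have h1 := key u v hu hv
  have h2 := key v u hv hu
  omega

end LowerAux


section LowerCut
variable {m ℓ : ℕ}

lemma row2_cut (hℓ1 : 1 ≤ ℓ) (hℓ2 : ℓ < m) (E₀ h : Vt m ℓ → ℤ) (c : ℤ)
    (heff : Effective (fun w => E₀ w + lap (rookGraph (Sm2l m ℓ)) h w))
    (hc : ∀ w : Vt m ℓ, w.1.2 = 1 → h w = c)
    (hex : ∃ u : Vt m ℓ, c + 1 ≤ h u) :
    (ℓ:ℤ) ≤ ∑ v ∈ Finset.univ.filter (fun v : Vt m ℓ => c + 1 ≤ h v), E₀ v := by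
  have hL := L1 (rookGraph (Sm2l m ℓ)) E₀ h (c+1) heff
  set A : Finset (Vt m ℓ) := Finset.univ.filter (fun v => c + 1 ≤ h v) with hA
  set A' : Finset (Vt m ℓ) := Finset.univ.filter (fun v => ¬ c + 1 ≤ h v) with hA'
  have hA2 : ∀ v ∈ A, v.1.2 = 2 := by
    intro v hv
    have hv' : c + 1 ≤ h v := (Finset.mem_filter.mp hv).2
    rcases mem_Sm2l.mp v.2 with hr | hr
    · exfalso; have := hc v hr.2.2; omega
    · exact hr.2.2
  set R2 : Finset (Vt m ℓ) := Finset.univ.filter (fun v : Vt m ℓ => v.1.2 = 2) with hR2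
  have hAR2 : A ⊆ R2 := fun v hv => Finset.mem_filter.mpr ⟨Finset.mem_univ v, hA2 v hv⟩
  have hcardR2 : R2.card = ℓ := card_R2
  set k : ℕ := (R2 \ A).card with hk
  have hcards : k + A.card = ℓ := by
    have hsd := Finset.card_sdiff_add_card_eq_card hAR2
    rw [hcardR2] at hsd
    omega
  obtain ⟨u₀, hu₀⟩ := hex
  have hApos : 1 ≤ A.card :=
    Finset.card_pos.mpr ⟨u₀, Finset.mem_filter.mpr ⟨Finset.mem_univ _, hu₀⟩⟩
  -- inner bound
  have inner : ∀ v ∈ A, (k:ℤ) + 1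
      ≤ ∑ u ∈ A', (if (rookGraph (Sm2l m ℓ)).Adj u v then (1:ℤ) else 0) := by
    intro v hv
    have hv2 : v.1.2 = 2 := hA2 v hv
    have hv1 : 1 ≤ v.1.1 ∧ v.1.1 ≤ ℓ := by
      rcases mem_Sm2l.mp v.2 with hr | hr
      · exfalso; omega
      · exact ⟨hr.1, hr.2.1⟩
    have hmate_mem : ((v.1.1 : ℕ), (1:ℕ)) ∈ Sm2l m ℓ :=
      mem_Sm2l.mpr (Or.inl ⟨hv1.1, by omega, rfl⟩)
    set mv : Vt m ℓ := ⟨(v.1.1, 1), hmate_mem⟩ with hmv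
    have hmv1 : mv.1.2 = 1 := rfl
    have hmv_not : mv ∉ R2 \ A := by
      intro hcon
      have h1 := (Finset.mem_filter.mp (Finset.mem_sdiff.mp hcon).1).2
      rw [hmv1] at h1
      omega
    have hsubset : insert mv (R2 \ A) ⊆ A' := by
      intro u hu
      rcases Finset.mem_insert.mp hu with rfl | hu
      · refine Finset.mem_filter.mpr ⟨Finset.mem_univ _, ?_⟩
        have := hc mv hmv1
        omega
      · have hu' := Finset.mem_sdiff.mp hu
        refine Finset.mem_filter.mpr ⟨Finset.mem_univ _, fun hcon => ?_⟩
        exact hu'.2 (Finset.mem_filter.mpr ⟨Finset.mem_univ _, hcon⟩)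
    have hval : ∑ u ∈ insert mv (R2 \ A),
        (if (rookGraph (Sm2l m ℓ)).Adj u v then (1:ℤ) else 0) = (k:ℤ) + 1 := by
      rw [Finset.sum_insert hmv_not]
      have h1 : (if (rookGraph (Sm2l m ℓ)).Adj mv v then (1:ℤ) else 0) = 1 := by
        rw [if_pos]
        refine ⟨?_, Or.inl rfl⟩
        intro hceq
        have h12 : mv.1.2 = v.1.2 := by rw [hceq]
        rw [hmv1, hv2] at h12
        omega
      have h2 : ∑ u ∈ R2 \ A, (if (rookGraph (Sm2l m ℓ)).Adj u v then (1:ℤ) else 0)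
          = (k:ℤ) := by
        have e1 : ∀ u ∈ R2 \ A, (if (rookGraph (Sm2l m ℓ)).Adj u v then (1:ℤ) else 0) = 1 := by
          intro u hu
          have hu2 : u.1.2 = 2 := (Finset.mem_filter.mp (Finset.mem_sdiff.mp hu).1).2
          rw [if_pos]
          refine ⟨?_, Or.inr (by rw [hu2, hv2])⟩
          intro hceq
          exact (Finset.mem_sdiff.mp hu).2 (hceq ▸ hv)
        rw [Finset.sum_congr rfl e1, Finset.sum_const, hk]
        simp
      rw [h1, h2]
      ring
    calc (k:ℤ) + 1 = ∑ u ∈ insert mv (R2 \ A),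
          (if (rookGraph (Sm2l m ℓ)).Adj u v then (1:ℤ) else 0) := hval.symm
      _ ≤ ∑ u ∈ A', (if (rookGraph (Sm2l m ℓ)).Adj u v then (1:ℤ) else 0) := by
          refine Finset.sum_le_sum_of_subset_of_nonneg hsubset ?_
          intro u _ _
          by_cases hadj : (rookGraph (Sm2l m ℓ)).Adj u v <;> simp [hadj]
  have houter : (A.card : ℤ) * ((k:ℤ) + 1)
      ≤ ∑ v ∈ A, ∑ u ∈ A', (if (rookGraph (Sm2l m ℓ)).Adj u v then (1:ℤ) else 0) := by
    have e1 : (A.card : ℤ) * ((k:ℤ) + 1) = ∑ _v ∈ A, ((k:ℤ) + 1) := by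
      rw [Finset.sum_const, nsmul_eq_mul]
    rw [e1]
    exact Finset.sum_le_sum inner
  have hAc : (1:ℤ) ≤ (A.card : ℤ) := by exact_mod_cast hApos
  have hkc : (k:ℤ) + (A.card : ℤ) = (ℓ:ℤ) := by exact_mod_cast hcards
  have : (ℓ:ℤ) ≤ (A.card : ℤ) * ((k:ℤ) + 1) := by nlinarith
  calc (ℓ:ℤ) ≤ (A.card : ℤ) * ((k:ℤ) + 1) := this
    _ ≤ _ := houter
    _ ≤ ∑ v ∈ A, E₀ v := hL

end LowerCut


section LowerMain
variable {m ℓ : ℕ}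

lemma lap_high_zero (hℓ2 : ℓ < m) (h : Vt m ℓ → ℤ)
    (hconst : ∀ u w : Vt m ℓ, u.1.2 = 1 → w.1.2 = 1 → h u = h w)
    (v : Vt m ℓ) (hv1 : v.1.2 = 1) (hv2 : ℓ < v.1.1) :
    lap (rookGraph (Sm2l m ℓ)) h v = 0 := by
  apply lap_eq_zero_of_adj_const _ h v (h v) rfl
  intro u hadj
  have hu1 : u.1.2 = 1 := by
    rcases (adj_coords.mp hadj).2 with hcol | hrow
    · rcases mem_Sm2l.mp u.2 with hr | hr
      · exact hr.2.2
      · exfalso; omega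
    · rw [hrow, hv1]
  exact hconst u v hu1 hv1

lemma lower_bound (hm : 2 ≤ m) (hℓ1 : 1 ≤ ℓ) (hℓ2 : ℓ < m) :
    ∀ d ∈ gonSet (Sm2l m ℓ), (m:ℤ) - 1 ≤ d := by
  rintro d ⟨D, hPR, hdeg⟩
  by_contra hlt
  push_neg at hlt
  have hd2 : d ≤ (m:ℤ) - 2 := by omega
  have ha1mem : ((1:ℕ),(1:ℕ)) ∈ Sm2l m ℓ := mem_Sm2l.mpr (Or.inl ⟨le_refl 1, by omega, rfl⟩)
  obtain ⟨E₀, hle₀, hE₀eff, -⟩ := hPR ⟨(1,1), ha1mem⟩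
  have hdegE₀ : degD E₀ = d := by
    rw [degD_linEquiv (rookGraph (Sm2l m ℓ)) hle₀, hdeg]
  obtain ⟨f₀, hf₀⟩ := hle₀
  -- witnesses relative to E₀
  have wit : ∀ v : Vt m ℓ, ∃ (E : Vt m ℓ → ℤ) (h : Vt m ℓ → ℤ),
      (∀ w, E w = E₀ w + lap (rookGraph (Sm2l m ℓ)) h w) ∧ Effective E ∧ 0 < E v := by
    intro v
    obtain ⟨E, ⟨g, hg⟩, hEeff, hEv⟩ := hPR v
    refine ⟨E, fun u => g u - f₀ u, fun w => ?_, hEeff, hEv⟩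
    rw [lap_sub, hg w, hf₀ w]
    ring
  -- chips on the high part of row 1
  have hH : ∀ v : Vt m ℓ, v.1.2 = 1 → ℓ < v.1.1 → 1 ≤ E₀ v := by
    intro v hv1 hv2
    obtain ⟨E, h, hEh, hEeff, hEv⟩ := wit v
    have heff : Effective (fun w => E₀ w + lap (rookGraph (Sm2l m ℓ)) h w) := by
      intro w
      dsimp only
      rw [← hEh w]
      exact hEeff w
    have hconst := const_row1 hm E₀ h hE₀eff (by omega) heff
    have hlap := lap_high_zero hℓ2 h hconst v hv1 hv2
    have hpos := hEv
    rw [hEh v, hlap, add_zero] at hpos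
    omega
  -- the master contradiction device
  have contra : ∀ (E' : Vt m ℓ → ℤ), Effective E' → degD E' = d →
      (∀ v : Vt m ℓ, v.1.2 = 1 → ℓ < v.1.1 → 1 ≤ E' v) →
      ∀ (A : Finset (Vt m ℓ)), (∀ v ∈ A, v.1.2 = 2) → (ℓ:ℤ) ≤ ∑ v ∈ A, E' v → False := by
    intro E' hEeff hEdeg hHE A hA2 hAsum
    set H : Finset (Vt m ℓ) := Finset.univ.filter (fun v : Vt m ℓ => v.1.2 = 1 ∧ ℓ < v.1.1)
      with hHdef
    have hHcard : H.card = m - ℓ := card_H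
    have hHsum : ((m:ℤ) - (ℓ:ℤ)) ≤ ∑ v ∈ H, E' v := by
      have h1 : ∑ v ∈ H, (1:ℤ) ≤ ∑ v ∈ H, E' v := by
        refine Finset.sum_le_sum fun v hv => ?_
        have hv' := (Finset.mem_filter.mp hv).2
        exact hHE v hv'.1 hv'.2
      rw [Finset.sum_const, nsmul_eq_mul, mul_one, hHcard] at h1
      have h2 : ((m - ℓ : ℕ) : ℤ) = (m:ℤ) - (ℓ:ℤ) := by
        push_cast [Nat.cast_sub hℓ2.le]
        ring
      rw [h2] at h1
      exact h1
    have hdisj : Disjoint A H := by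
      rw [Finset.disjoint_left]
      intro v hvA hvH
      have h1 := hA2 v hvA
      have h2 := (Finset.mem_filter.mp hvH).2.1
      omega
    have hunion : ∑ v ∈ A ∪ H, E' v ≤ d := by
      rw [← hEdeg]
      unfold degD
      exact Finset.sum_le_sum_of_subset_of_nonneg (Finset.subset_univ _) (fun v _ _ => hEeff v)
    rw [Finset.sum_union hdisj] at hunion
    have : (ℓ:ℤ) + ((m:ℤ) - (ℓ:ℤ)) ≤ d := by linarith
    omega
  -- chips on all of row 2
  have hB : ∀ v : Vt m ℓ, v.1.2 = 2 → 1 ≤ E₀ v := by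
    intro v hv2
    obtain ⟨E, h, hEh, hEeff, hEv⟩ := wit v
    have heff : Effective (fun w => E₀ w + lap (rookGraph (Sm2l m ℓ)) h w) := by
      intro w
      dsimp only
      rw [← hEh w]
      exact hEeff w
    have hconst := const_row1 hm E₀ h hE₀eff (by omega) heff
    have hc : ∀ w : Vt m ℓ, w.1.2 = 1 → h w = h ⟨(1,1), ha1mem⟩ :=
      fun w hw => hconst w ⟨(1,1), ha1mem⟩ hw rfl
    by_cases htop : ∃ u : Vt m ℓ, h ⟨(1,1), ha1mem⟩ + 1 ≤ h u
    · exfalso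
      have hcut := row2_cut hℓ1 hℓ2 E₀ h (h ⟨(1,1), ha1mem⟩) heff hc htop
      refine contra E₀ hE₀eff hdegE₀ hH _ ?_ hcut
      intro w hw
      have hw' : h ⟨(1,1), ha1mem⟩ + 1 ≤ h w := (Finset.mem_filter.mp hw).2
      rcases mem_Sm2l.mp w.2 with hr | hr
      · exfalso; have := hc w hr.2.2; omega
      · exact hr.2.2
    · by_cases hbot : ∃ u : Vt m ℓ, h u ≤ h ⟨(1,1), ha1mem⟩ - 1
      · exfalso
        have heff' : Effective
            (fun w => E w + lap (rookGraph (Sm2l m ℓ)) (fun u => - h u) w) := by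
          intro w
          dsimp only
          rw [lap_neg, hEh w]
          have : E₀ w + lap (rookGraph (Sm2l m ℓ)) h w
              + -lap (rookGraph (Sm2l m ℓ)) h w = E₀ w := by ring
          rw [this]
          exact hE₀eff w
        have hc' : ∀ w : Vt m ℓ, w.1.2 = 1 → (fun u => - h u) w = - h ⟨(1,1), ha1mem⟩ := by
          intro w hw
          dsimp only
          rw [hc w hw]
        have hex' : ∃ u : Vt m ℓ, - h ⟨(1,1), ha1mem⟩ + 1 ≤ (fun u => - h u) u := by
          obtain ⟨u, hu⟩ := hbot
          exact ⟨u, by dsimp only; omega⟩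
        have hcut := row2_cut hℓ1 hℓ2 E (fun u => - h u) (- h ⟨(1,1), ha1mem⟩) heff' hc' hex'
        have hEdeg : degD E = d := by
          rw [degD_linEquiv (rookGraph (Sm2l m ℓ)) ⟨h, hEh⟩, hdegE₀]
        have hHE : ∀ w : Vt m ℓ, w.1.2 = 1 → ℓ < w.1.1 → 1 ≤ E w := by
          intro w hw1 hw2
          have hlap := lap_high_zero hℓ2 h hconst w hw1 hw2
          rw [hEh w, hlap, add_zero]
          exact hH w hw1 hw2
        refine contra E hEeff hEdeg hHE _ ?_ hcut
        intro w hw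
        have hw' : - h ⟨(1,1), ha1mem⟩ + 1 ≤ - h w := (Finset.mem_filter.mp hw).2
        rcases mem_Sm2l.mp w.2 with hr | hr
        · exfalso; have := hc w hr.2.2; omega
        · exact hr.2.2
      · push_neg at htop hbot
        have hallc : ∀ u : Vt m ℓ, h u = h ⟨(1,1), ha1mem⟩ := by
          intro u
          have h1 := htop u
          have h2 := hbot u
          omega
        have hlap0 : lap (rookGraph (Sm2l m ℓ)) h v = 0 :=
          lap_eq_zero_of_adj_const _ h v (h ⟨(1,1), ha1mem⟩) (hallc v) (fun u _ => hallc u)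
        have hpos := hEv
        rw [hEh v, hlap0, add_zero] at hpos
        omega
  -- final contradiction
  have hR2sum : (ℓ:ℤ) ≤ ∑ v ∈ Finset.univ.filter (fun v : Vt m ℓ => v.1.2 = 2), E₀ v := by
    have h1 : ∑ v ∈ Finset.univ.filter (fun v : Vt m ℓ => v.1.2 = 2), (1:ℤ)
        ≤ ∑ v ∈ Finset.univ.filter (fun v : Vt m ℓ => v.1.2 = 2), E₀ v := by
      refine Finset.sum_le_sum fun v hv => ?_
      exact hB v (Finset.mem_filter.mp hv).2
    rw [Finset.sum_const, nsmul_eq_mul, mul_one, card_R2] at h1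
    exact h1
  exact contra E₀ hE₀eff hdegE₀ hH _ (fun v hv => (Finset.mem_filter.mp hv).2) hR2sum

end LowerMain



theorem stmt7 (m ℓ : ℕ) (hm : 2 ≤ m) (hℓ1 : 1 ≤ ℓ) (hℓ2 : ℓ < m) :
    IsLeast (gonSet (Sm2l m ℓ)) ((m : ℤ) - 1) :=
  ⟨upper_mem hm hℓ1 hℓ2, fun d hd => lower_bound hm hℓ1 hℓ2 d hd⟩
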